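/- Let q be a real number with 1 ≤ q < ∞. If f : ℝ → ℝ is continuously differentiable, f belongs to L^q(ℝ), and its derivative f' is integrable on ℝ, then ∫_ℝ f'(t) dt = 0. -/

import Mathlib

open MeasureTheory Filter Set Topology ENNReal

/-- If `f : ℝ → ℝ` is continuously differentiable, belongs to `L^q` for some
`1 ≤ q < ∞`, and its derivative is integrable, then `∫ f' = 0`. -/
theorem integral_deriv_eq_zero_of_memLp
    (q : ℝ) (hq : 1 ≤ q)
    (f : ℝ → ℝ) (hf : ContDiff ℝ 1 f)
    (hfq : MemLp f (ENNReal.ofReal q) volume)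
    (hf' : Integrable (deriv f) volume) :
    ∫ t : ℝ, deriv f t = 0 := by
  have hq0 : (0:ℝ) < q := lt_of_lt_of_le zero_lt_one hq
  have hdiff : ∀ x, HasDerivAt f (deriv f x) x :=
    fun x => (hf.differentiable one_ne_zero x).hasDerivAt
  have hmT : Tendsto f atTop (𝓝 (limUnder atTop f)) :=
    tendsto_limUnder_of_hasDerivAt_of_integrableOn_Ioi (a := 0)
      (fun x _ => hdiff x) hf'.integrableOn
  have hmB : Tendsto f atBot (𝓝 (limUnder atBot f)) :=
    tendsto_limUnder_of_hasDerivAt_of_integrableOn_Iic (a := 0)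
      (fun x _ => hdiff x) hf'.integrableOn
  have hint : Integrable (fun x => ‖f x‖ ^ q) volume := by
    have := hfq.integrable_norm_rpow (by simp [ENNReal.ofReal_eq_zero]; linarith)
      (by simp)
    simpa [ENNReal.toReal_ofReal hq0.le] using this
  have key : ∀ {l : Filter ℝ}, (∀ s ∈ l, volume s = ∞) → ∀ {m : ℝ},
      Tendsto f l (𝓝 m) → m = 0 := by
    intro l hl m hm
    have h1 : Tendsto (fun x => ‖f x‖ ^ q) l (𝓝 (‖m‖ ^ q)) :=
      (hm.norm).rpow_const (Or.inr hq0.le)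
    have h2 : IntegrableAtFilter (fun x => ‖f x‖ ^ q) l volume :=
      ⟨Set.univ, Filter.univ_mem, hint.integrableOn⟩
    have h3 := h2.eq_zero_of_tendsto hl h1
    have : ‖m‖ = 0 := by
      rwa [Real.rpow_eq_zero (norm_nonneg m) hq0.ne'] at h3
    simpa using this
  have hT0 : limUnder atTop f = 0 := by
    apply key _ hmT
    intro s hs
    rcases mem_atTop_sets.1 hs with ⟨b, hb⟩
    rw [← top_le_iff, ← Real.volume_Ici (a := b)]
    exact measure_mono hb
  have hB0 : limUnder atBot f = 0 := by
    apply key _ hmB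
    intro s hs
    rcases mem_atBot_sets.1 hs with ⟨b, hb⟩
    rw [← top_le_iff, ← Real.volume_Iic (a := b)]
    exact measure_mono hb
  have hIoi : ∫ x in Ioi (0:ℝ), deriv f x = 0 - f 0 :=
    integral_Ioi_of_hasDerivAt_of_tendsto' (fun x _ => hdiff x)
      hf'.integrableOn (hT0 ▸ hmT)
  have hIic : ∫ x in Iic (0:ℝ), deriv f x = f 0 - 0 :=
    integral_Iic_of_hasDerivAt_of_tendsto' (fun x _ => hdiff x)
      hf'.integrableOn (hB0 ▸ hmB)
  rw [← intervalIntegral.integral_Iic_add_Ioi (b := (0:ℝ)) hf'.integrableOn hf'.integrableOn,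
    hIoi, hIic]
  ring
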